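/- Let $G$ be a locally finite group and $A$ any set. Then every cellular automaton $\tau \colon A^G \to A^G$ has closed image in $A^G$ for the prodiscrete topology. -/

import Mathlib

/-- `τ` is a cellular automaton over the group `G` and alphabet `A`:
there are a finite memory set `M ⊆ G` and a local defining map
`μ : A^M → A` with `τ(x)(g) = μ((g⁻¹ · x)|_M)`; note `(g⁻¹ · x)(m) = x (g * m)`. -/
def IsCellularAutomaton {G A : Type*} [Group G] (τ : (G → A) → (G → A)) : Prop :=
  ∃ (M : Finset G) (μ : (M → A) → A),
    ∀ (x : G → A) (g : G), τ x g = μ (fun m => x (g * m.val))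


/-- The prodiscrete topology on `G → A`: product of discrete topologies. -/
def prodiscrete (G A : Type*) : TopologicalSpace (G → A) :=
  @Pi.topologicalSpace G (fun _ => A) (fun _ => ⊥)

theorem ca_closed_image_of_locally_finite
    {G : Type*} [Group G]
    (hLF : ∀ S : Finset G, Finite (Subgroup.closure (S : Set G)))
    {A : Type*} (τ : (G → A) → (G → A)) (hca : IsCellularAutomaton τ) :
    @IsClosed _ (prodiscrete G A) (Set.range τ) := by
  classical
  obtain ⟨M, μ, hμ⟩ := hca
  letI : TopologicalSpace A := ⊥
  haveI : DiscreteTopology A := ⟨rfl⟩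
  show IsClosed (Set.range τ)
  set H : Subgroup G := Subgroup.closure (M : Set G) with hH
  haveI : Finite H := hLF M
  refine isClosed_of_closure_subset ?_
  intro x hx
  have key : ∀ q : G ⧸ H, ∃ z : G → A,
      ∀ g : G, (QuotientGroup.mk g : G ⧸ H) = q → τ z g = x g := by
    intro q
    obtain ⟨r, rfl⟩ := QuotientGroup.mk_surjective q
    set C : Set G := {g : G | (QuotientGroup.mk g : G ⧸ H) = QuotientGroup.mk r} with hC
    have hCfin : C.Finite := by
      have hsub : C ⊆ (fun h : G => r * h) '' (H : Set G) := by
        intro g hg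
        have hmem : g⁻¹ * r ∈ H := QuotientGroup.eq.mp hg
        refine ⟨r⁻¹ * g, ?_, by group⟩
        simpa using H.inv_mem hmem
      exact ((Set.toFinite (H : Set G)).image _).subset hsub
    set U : Set (G → A) := ⋂ g ∈ C, {y : G → A | y g = x g} with hUdef
    have hU : IsOpen U := by
      refine hCfin.isOpen_biInter fun g _ => ?_
      have he : {y : G → A | y g = x g} = (fun y : G → A => y g) ⁻¹' {x g} := rfl
      rw [he]
      exact (isOpen_discrete ({x g} : Set A)).preimage (continuous_apply g)
    have hxU : x ∈ U := by
      simp only [hUdef, Set.mem_iInter, Set.mem_setOf_eq]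
      intro g _
      trivial
    obtain ⟨y, hyU, z, rfl⟩ := mem_closure_iff.mp hx U hU hxU
    exact ⟨z, fun g hg => Set.mem_iInter₂.mp hyU g hg⟩
  choose w hw using key
  refine ⟨fun g' => w (QuotientGroup.mk g') g', ?_⟩
  funext g
  have coset : ∀ m : M, (QuotientGroup.mk (g * m.val) : G ⧸ H) = QuotientGroup.mk g := by
    intro m
    have hm : (m : G) ∈ H := Subgroup.subset_closure m.2
    refine QuotientGroup.eq.mpr ?_
    simpa [mul_inv_rev, mul_assoc] using H.inv_mem hm
  calc τ (fun g' => w (QuotientGroup.mk g') g') g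
      = μ (fun m => w (QuotientGroup.mk (g * m.val)) (g * m.val)) := hμ _ g
    _ = μ (fun m => w (QuotientGroup.mk g) (g * m.val)) := by
        congr 1; funext m; rw [coset m]
    _ = τ (w (QuotientGroup.mk g)) g := (hμ _ g).symm
    _ = x g := hw _ g rfl
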